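/- The function τ₀(t) = ( t[(1−t)log((1−t)/t) − 1]² + π² t (1−t)² )^{−1} is a probability density on (0,1), i.e., τ₀(t) > 0 for 0 < t < 1 and ∫₀¹ τ₀(t) dt = 1. -/

import Mathlib

/-- The density `τ₀(t) = ( t[(1−t)log((1−t)/t) − 1]² + π² t (1−t)² )⁻¹` for `0 < t < 1`. -/
noncomputable def tau0 (t : ℝ) : ℝ :=
  (t * ((1 - t) * Real.log ((1 - t) / t) - 1) ^ 2 + Real.pi ^ 2 * t * (1 - t) ^ 2)⁻¹

open Real Set Filter MeasureTheory
open scoped Topology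

/-- Auxiliary function whose arctan gives an antiderivative of `tau0`. -/
noncomputable def tauPhi (t : ℝ) : ℝ := Real.log ((1 - t) / t) - 1 / (1 - t)

/-- Antiderivative of `tau0` on `(0,1)`. -/
noncomputable def tauF (t : ℝ) : ℝ := -(Real.arctan (tauPhi t / Real.pi)) / Real.pi

lemma tau0_den_pos {t : ℝ} (ht : t ∈ Set.Ioo (0 : ℝ) 1) :
    0 < t * ((1 - t) * Real.log ((1 - t) / t) - 1) ^ 2 + Real.pi ^ 2 * t * (1 - t) ^ 2 := by
  obtain ⟨ht0, ht1⟩ := ht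
  have h1t : 0 < 1 - t := by linarith
  have h2 : 0 < Real.pi ^ 2 * t * (1 - t) ^ 2 := by positivity
  nlinarith [sq_nonneg ((1 - t) * Real.log ((1 - t) / t) - 1), mul_nonneg ht0.le
    (sq_nonneg ((1 - t) * Real.log ((1 - t) / t) - 1))]

lemma tauF_hasDerivAt {t : ℝ} (ht : t ∈ Set.Ioo (0 : ℝ) 1) :
    HasDerivAt tauF (tau0 t) t := by
  obtain ⟨ht0, ht1⟩ := ht
  have h1t : 0 < 1 - t := by linarith
  -- derivative of phi
  have h1 : HasDerivAt (fun s : ℝ => 1 - s) (-1) t := by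
    simpa using (hasDerivAt_id t).const_sub 1
  have hlog1 : HasDerivAt (fun s : ℝ => Real.log (1 - s)) (-1 / (1 - t)) t :=
    h1.log h1t.ne'
  have hlog2 : HasDerivAt Real.log t⁻¹ t := Real.hasDerivAt_log ht0.ne'
  have hinv : HasDerivAt (fun s : ℝ => (1 - s)⁻¹) (-(-1) / (1 - t) ^ 2) t :=
    h1.inv h1t.ne'
  have hg : HasDerivAt (fun s : ℝ => Real.log (1 - s) - Real.log s - (1 - s)⁻¹)
      ((-1 / (1 - t) - t⁻¹) - -(-1) / (1 - t) ^ 2) t :=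
    (hlog1.sub hlog2).sub hinv
  have hphi : HasDerivAt tauPhi ((-1 / (1 - t) - t⁻¹) - -(-1) / (1 - t) ^ 2) t := by
    refine hg.congr_of_eventuallyEq ?_
    filter_upwards [Ioo_mem_nhds ht0 ht1] with s hs
    obtain ⟨hs0, hs1⟩ := hs
    have hs1' : (0 : ℝ) < 1 - s := by linarith
    unfold tauPhi
    rw [Real.log_div hs1'.ne' hs0.ne', one_div]
  -- derivative of F
  have hpi : (0 : ℝ) < Real.pi := Real.pi_pos
  have harct : HasDerivAt (fun s => Real.arctan (tauPhi s / Real.pi))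
      ((1 / (1 + (tauPhi t / Real.pi) ^ 2)) *
        (((-1 / (1 - t) - t⁻¹) - -(-1) / (1 - t) ^ 2) / Real.pi)) t :=
    by have := (Real.hasDerivAt_arctan (tauPhi t / Real.pi)).comp t (hphi.div_const Real.pi); exact this
  have hF : HasDerivAt tauF
      (-((1 / (1 + (tauPhi t / Real.pi) ^ 2)) *
        (((-1 / (1 - t) - t⁻¹) - -(-1) / (1 - t) ^ 2) / Real.pi)) / Real.pi) t :=
    harct.neg.div_const _
  convert hF using 1
  have hden := tau0_den_pos ⟨ht0, ht1⟩
  have hplus : (0 : ℝ) < 1 + (tauPhi t / Real.pi) ^ 2 := by positivity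
  have key : (-((1 / (1 + (tauPhi t / Real.pi) ^ 2)) *
        (((-1 / (1 - t) - t⁻¹) - -(-1) / (1 - t) ^ 2) / Real.pi)) / Real.pi) *
      (t * ((1 - t) * Real.log ((1 - t) / t) - 1) ^ 2 + Real.pi ^ 2 * t * (1 - t) ^ 2) = 1 := by
    unfold tauPhi
    set L := Real.log ((1 - t) / t) with hL
    field_simp [tauPhi, ht0.ne', h1t.ne', hpi.ne']
    ring
  unfold tau0
  exact (eq_inv_of_mul_eq_one_left key).symm

lemma tauF_tendsto_zero : Tendsto tauF (𝓝[>] (0 : ℝ)) (𝓝 (-(1 / 2))) := by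
  have hpi : (0 : ℝ) < Real.pi := Real.pi_pos
  have h1 : Tendsto (fun t : ℝ => -Real.log t) (𝓝[>] (0 : ℝ)) atTop :=
    tendsto_neg_atBot_atTop.comp Real.tendsto_log_nhdsGT_zero
  have h2 : Tendsto (fun t : ℝ => Real.log (1 - t) - 1 / (1 - t)) (𝓝[>] (0 : ℝ))
      (𝓝 (Real.log (1 - 0) - 1 / (1 - 0))) := by
    apply Tendsto.mono_left _ nhdsWithin_le_nhds
    have hc : ContinuousAt (fun t : ℝ => Real.log (1 - t) - 1 / (1 - t)) 0 := by
      have hc1 : ContinuousAt (fun t : ℝ => 1 - t) 0 := by fun_prop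
      exact (hc1.log (by norm_num)).sub ((continuousAt_const).div hc1 (by norm_num))
    exact hc
  have hphi : Tendsto tauPhi (𝓝[>] (0 : ℝ)) atTop := by
    refine (h1.atTop_add h2).congr' ?_
    filter_upwards [Ioo_mem_nhdsGT_of_mem (by norm_num : (0:ℝ) ∈ Ico (0:ℝ) 1)] with t ht
    obtain ⟨ht0, ht1⟩ := ht
    have h1t : (0:ℝ) < 1 - t := by linarith
    unfold tauPhi
    rw [Real.log_div h1t.ne' ht0.ne']
    ring
  have harct : Tendsto (fun t => Real.arctan (tauPhi t / Real.pi)) (𝓝[>] (0 : ℝ))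
      (𝓝 (Real.pi / 2)) :=
    (Real.tendsto_arctan_atTop.mono_right nhdsWithin_le_nhds).comp
      (hphi.atTop_div_const hpi)
  have := (harct.neg).div_const Real.pi
  convert this using 2
  · rfl
  rw [eq_div_iff hpi.ne']
  ring

lemma tauF_tendsto_one : Tendsto tauF (𝓝[<] (1 : ℝ)) (𝓝 (1 / 2)) := by
  have hpi : (0 : ℝ) < Real.pi := Real.pi_pos
  have hsub : Tendsto (fun t : ℝ => 1 - t) (𝓝[<] (1 : ℝ)) (𝓝[>] (0 : ℝ)) := by
    apply tendsto_nhdsWithin_of_tendsto_nhds_of_eventually_within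
    · have : ContinuousAt (fun t : ℝ => 1 - t) 1 := by fun_prop
      simpa using this.tendsto.mono_left nhdsWithin_le_nhds
    · filter_upwards [self_mem_nhdsWithin] with t ht
      simp only [Set.mem_Iio] at ht
      simp only [Set.mem_Ioi]
      linarith
  have h1 : Tendsto (fun t : ℝ => Real.log (1 - t)) (𝓝[<] (1 : ℝ)) atBot :=
    Real.tendsto_log_nhdsGT_zero.comp hsub
  have h2 : Tendsto (fun t : ℝ => -(1 - t)⁻¹) (𝓝[<] (1 : ℝ)) atBot :=
    tendsto_neg_atTop_atBot.comp (tendsto_inv_nhdsGT_zero.comp hsub)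
  have h3 : Tendsto (fun t : ℝ => -Real.log t) (𝓝[<] (1 : ℝ)) (𝓝 (-Real.log 1)) := by
    apply Tendsto.mono_left _ nhdsWithin_le_nhds
    exact (Real.continuousAt_log (by norm_num)).neg.tendsto
  have hphi : Tendsto tauPhi (𝓝[<] (1 : ℝ)) atBot := by
    refine ((Tendsto.atBot_add_atBot h1 h2).atBot_add h3).congr' ?_
    filter_upwards [Ioo_mem_nhdsLT_of_mem (by norm_num : (1:ℝ) ∈ Ioc (0:ℝ) 1)] with t ht
    obtain ⟨ht0, ht1⟩ := ht
    have h1t : (0:ℝ) < 1 - t := by linarith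
    unfold tauPhi
    rw [Real.log_div h1t.ne' ht0.ne', one_div]
    ring
  have harct : Tendsto (fun t => Real.arctan (tauPhi t / Real.pi)) (𝓝[<] (1 : ℝ))
      (𝓝 (-(Real.pi / 2))) :=
    (Real.tendsto_arctan_atBot.mono_right nhdsWithin_le_nhds).comp
      (hphi.atBot_div_const hpi)
  have := (harct.neg).div_const Real.pi
  convert this using 2
  · rfl
  rw [eq_div_iff hpi.ne']
  ring

/-- `τ₀` is a probability density on `(0,1)`: it is positive there and integrates to `1`. -/
theorem tau0_probability_density :
    (∀ t ∈ Set.Ioo (0 : ℝ) 1, 0 < tau0 t) ∧ (∫ t in (0 : ℝ)..1, tau0 t) = 1 := by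
  have hpos : ∀ t ∈ Set.Ioo (0 : ℝ) 1, 0 < tau0 t := by
    intro t ht
    exact inv_pos.mpr (tau0_den_pos ht)
  refine ⟨hpos, ?_⟩
  have hderiv : ∀ x ∈ Ioo (0 : ℝ) 1, HasDerivAt tauF (tau0 x) x :=
    fun x hx => tauF_hasDerivAt hx
  -- integrability via a continuous extension
  set F : ℝ → ℝ := Function.update (Function.update tauF 0 (-(1/2))) 1 (1/2) with hFdef
  have Fderiv : ∀ x ∈ Ioo (0 : ℝ) 1, HasDerivAt F (tau0 x) x := by
    refine fun x hx => (hderiv x hx).congr_of_eventuallyEq ?_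
    filter_upwards [Ioo_mem_nhds hx.1 hx.2] with y hy
    rw [hFdef, Function.update_of_ne hy.2.ne, Function.update_of_ne hy.1.ne']
  have hcont : ContinuousOn F (Icc (0 : ℝ) 1) := by
    rw [hFdef, continuousOn_update_iff, continuousOn_update_iff, Icc_sdiff_right, Ico_sdiff_left]
    refine ⟨⟨fun z hz => (hderiv z hz).continuousAt.continuousWithinAt, ?_⟩, ?_⟩
    · exact fun _ => tauF_tendsto_zero.mono_left (nhdsWithin_mono _ Ioo_subset_Ioi_self)
    · rintro -
      refine (tauF_tendsto_one.congr' ?_).mono_left (nhdsWithin_mono _ Ico_subset_Iio_self)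
      filter_upwards [Ioo_mem_nhdsLT_of_mem (right_mem_Ioc.2 (by norm_num : (0:ℝ) < 1))]
        with z hz using (Function.update_of_ne hz.1.ne' _ _).symm
  have hint : IntervalIntegrable tau0 volume 0 1 := by
    refine intervalIntegral.intervalIntegrable_deriv_of_nonneg (g := F) ?_ ?_ ?_
    · simpa [uIcc_of_le (by norm_num : (0:ℝ) ≤ 1)] using hcont
    · simpa using Fderiv
    · intro x hx
      simp only [min_def, max_def] at hx
      norm_num at hx
      exact (hpos x hx).le
  rw [intervalIntegral.integral_eq_sub_of_hasDerivAt_of_tendsto (by norm_num) hderiv hint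
    tauF_tendsto_zero tauF_tendsto_one]
  norm_num
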